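/- arXiv:2202.03139 — 5 statements merged into one kernel-verified Lean document; each statement's English description precedes it below -/
import Mathlib

section
/- For non-negative integers m and k, the sum over n from 0 to m of (-m)_n (-n)_k / n! equals m! if m = k and 0 otherwise, where (a)_n denotes the Pochhammer symbol (rising factorial). -/
open Finset Polynomial

lemma alt_sum_choose_Q (d : ℕ) :
    ∑ j ∈ Finset.range (d + 1), (-1 : ℚ) ^ j * (d.choose j : ℚ)
      = if d = 0 then 1 else 0 := by
  have h := Int.alternating_sum_range_choose (n := d)
  have := congrArg (fun z : ℤ => (z : ℚ)) h
  push_cast at this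
  simpa using this

theorem pochhammer_delta_sum (m k : ℕ) :
    ∑ n ∈ Finset.range (m + 1),
      (ascPochhammer ℚ n).eval (-(m : ℚ)) * (ascPochhammer ℚ k).eval (-(n : ℚ))
        / (Nat.factorial n : ℚ)
    = if m = k then (Nat.factorial m : ℚ) else 0 := by
  by_cases hk : k ≤ m
  · -- split the sum at k
    have hsplit : Finset.range (m + 1) = Finset.Ico 0 (m + 1) := by
      rw [Finset.range_eq_Ico]
    rw [hsplit, ← Finset.sum_Ico_consecutive _ (Nat.zero_le k) (by omega : k ≤ m + 1)]
    have h1 : ∑ n ∈ Finset.Ico 0 k,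
        (ascPochhammer ℚ n).eval (-(m : ℚ)) * (ascPochhammer ℚ k).eval (-(n : ℚ))
          / (Nat.factorial n : ℚ) = 0 := by
      apply Finset.sum_eq_zero
      intro n hn
      rw [Finset.mem_Ico] at hn
      rw [ascPochhammer_eval_neg_coe_nat_of_lt hn.2]
      ring
    rw [h1, zero_add, Finset.sum_Ico_eq_sum_range]
    have hrange : m + 1 - k = (m - k) + 1 := by omega
    rw [hrange]
    have hterm : ∀ j ∈ Finset.range (m - k + 1),
        (ascPochhammer ℚ (k + j)).eval (-(m : ℚ)) * (ascPochhammer ℚ k).eval (-((k + j : ℕ) : ℚ))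
          / (Nat.factorial (k + j) : ℚ)
        = (m.descFactorial k : ℚ) * ((-1 : ℚ) ^ j * ((m - k).choose j : ℚ)) := by
      intro j _
      rw [ascPochhammer_eval_neg_eq_descPochhammer, ascPochhammer_eval_neg_eq_descPochhammer,
        descPochhammer_eval_eq_descFactorial, descPochhammer_eval_eq_descFactorial]
      have h1 : (m - k).descFactorial j * m.descFactorial k = m.descFactorial (k + j) := by
        have := Nat.descFactorial_mul_descFactorial (k := k) (m := k + j) (n := m)
          (Nat.le_add_right k j)
        simpa using this
      have h2 : j.factorial * (k + j).descFactorial k = (k + j).factorial := by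
        have := Nat.factorial_mul_descFactorial (n := k + j) (k := k) (Nat.le_add_right k j)
        simpa using this
      have h3 : (m - k).descFactorial j = j.factorial * (m - k).choose j :=
        Nat.descFactorial_eq_factorial_mul_choose _ _
      have hfac : ((k + j).factorial : ℚ) ≠ 0 := Nat.cast_ne_zero.mpr (Nat.factorial_ne_zero _)
      have hjfac : (j.factorial : ℚ) ≠ 0 := Nat.cast_ne_zero.mpr (Nat.factorial_ne_zero _)
      have h1' : ((m - k).descFactorial j : ℚ) * (m.descFactorial k : ℚ)
          = (m.descFactorial (k + j) : ℚ) := by exact_mod_cast congrArg (Nat.cast : ℕ → ℚ) h1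
      have h2' : (j.factorial : ℚ) * ((k + j).descFactorial k : ℚ)
          = ((k + j).factorial : ℚ) := by exact_mod_cast congrArg (Nat.cast : ℕ → ℚ) h2
      have h3' : ((m - k).descFactorial j : ℚ)
          = (j.factorial : ℚ) * ((m - k).choose j : ℚ) := by
        exact_mod_cast congrArg (Nat.cast : ℕ → ℚ) h3
      have hsign : (-1 : ℚ) ^ (k + j) * (-1 : ℚ) ^ k = (-1 : ℚ) ^ j := by
        have hsq : ((-1 : ℚ) ^ k) ^ 2 = 1 := by
          rw [← pow_mul, mul_comm, pow_mul, neg_one_sq, one_pow]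
        rw [pow_add]
        linear_combination (-1 : ℚ) ^ j * hsq
      rw [div_eq_iff hfac]
      linear_combination ((m.descFactorial (k + j) : ℚ) * ((k + j).descFactorial k : ℚ)) * hsign
        - ((-1 : ℚ) ^ j * ((k + j).descFactorial k : ℚ)) * h1'
        + ((-1 : ℚ) ^ j * (m.descFactorial k : ℚ) * ((k + j).descFactorial k : ℚ)) * h3'
        + ((-1 : ℚ) ^ j * (m.descFactorial k : ℚ) * ((m - k).choose j : ℚ)) * h2'
    rw [Finset.sum_congr rfl hterm, ← Finset.mul_sum, alt_sum_choose_Q]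
    by_cases hmk : m = k
    · subst hmk
      simp [Nat.descFactorial_self]
    · have : m - k ≠ 0 := by omega
      simp [this, hmk]
  · -- k > m : every term vanishes
    have hmk : m ≠ k := by omega
    rw [if_neg hmk]
    apply Finset.sum_eq_zero
    intro n hn
    rw [Finset.mem_range] at hn
    have : n < k := by omega
    rw [ascPochhammer_eval_neg_coe_nat_of_lt this]
    ring
end

section
/- For integers 0 ≤ k ≤ n, ε ∈ {0,1}, and a real parameter μ with μ + 1/2 not a non-positive integer, the identity (1/2)_{k+ε} / (μ + 1/2)_{k+ε} = [(1/2)_{n+ε} / (μ + 1/2)_{n+ε}] · Σ_{s=0}^{n-k} (μ)_s (-n+k)_s / (s! · (-n - ε + 1/2)_s) holds. -/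
open Finset Polynomial

lemma asc_add_eval (a b : ℕ) (x : ℝ) :
    (ascPochhammer ℝ (a + b)).eval x
      = (ascPochhammer ℝ a).eval x * (ascPochhammer ℝ b).eval (x + a) := by
  rw [← ascPochhammer_mul, eval_mul, eval_comp]
  simp

lemma asc_reflect (m : ℕ) (x : ℝ) :
    (ascPochhammer ℝ m).eval x = (-1) ^ m * (ascPochhammer ℝ m).eval (-x - m + 1) := by
  have h := ascPochhammer_eval_neg_eq_descPochhammer (R := ℝ) (-x) m
  rw [neg_neg] at h
  rw [h, descPochhammer_eval_eq_ascPochhammer]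

lemma asc_ne_zero {x : ℝ} {m : ℕ} (h : ∀ j : ℕ, j < m → x + j ≠ 0) :
    (ascPochhammer ℝ m).eval x ≠ 0 := by
  induction m with
  | zero => simp
  | succ m ih =>
    rw [ascPochhammer_succ_eval]
    exact mul_ne_zero (ih fun j hj => h j (hj.trans (Nat.lt_succ_self m)))
      (h m (Nat.lt_succ_self m))

lemma asc_succ_eval' (r : ℕ) (x : ℝ) :
    (ascPochhammer ℝ (r + 1)).eval x = x * (ascPochhammer ℝ r).eval (x + 1) := by
  have := asc_add_eval 1 r x
  simpa [add_comm 1 r] using this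

lemma chu_vandermonde (m : ℕ) : ∀ b c : ℝ, (∀ j : ℕ, j < m → c + j ≠ 0) →
    ∑ s ∈ Finset.range (m + 1),
        (-1) ^ s * (m.choose s : ℝ) * (ascPochhammer ℝ s).eval b / (ascPochhammer ℝ s).eval c
      = (ascPochhammer ℝ m).eval (c - b) / (ascPochhammer ℝ m).eval c := by
  induction m with
  | zero => intro b c _; simp
  | succ m ih =>
    intro b c hc
    have hc0 : c ≠ 0 := by simpa using hc 0 (Nat.succ_pos m)
    have hc' : ∀ j : ℕ, j < m → (c + 1) + j ≠ 0 := by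
      intro j hj h0
      apply hc (j + 1) (by omega)
      push_cast
      linarith
    have hcm : ∀ j : ℕ, j < m → c + j ≠ 0 := fun j hj => hc j (hj.trans (Nat.lt_succ_self m))
    have hQ : (ascPochhammer ℝ m).eval c ≠ 0 := asc_ne_zero hcm
    have hQ1 : (ascPochhammer ℝ m).eval (c + 1) ≠ 0 := asc_ne_zero hc'
    have hcmne : c + m ≠ 0 := hc m (Nat.lt_succ_self m)
    set f : ℕ → ℝ := fun s =>
      (-1) ^ s * ((m+1).choose s : ℝ) * (ascPochhammer ℝ s).eval b / (ascPochhammer ℝ s).eval c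
      with hf
    set g : ℕ → ℝ := fun s =>
      (-1) ^ s * (m.choose s : ℝ) * (ascPochhammer ℝ s).eval b / (ascPochhammer ℝ s).eval c
      with hg
    set h : ℕ → ℝ := fun s =>
      (-1) ^ (s+1) * (m.choose s : ℝ) * (ascPochhammer ℝ (s+1)).eval b
        / (ascPochhammer ℝ (s+1)).eval c with hh
    have e2 : ∀ s, f (s+1) = g (s+1) + h s := by
      intro s
      simp only [hf, hg, hh, Nat.choose_succ_succ m s]
      push_cast
      ring
    have e3 : f 0 = g 0 := by simp [hf, hg]
    have e4 : g (m+1) = 0 := by simp [hg, Nat.choose_succ_self]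
    have key : ∑ s ∈ Finset.range (m + 2), f s
        = (∑ s ∈ Finset.range (m + 1), g s) + ∑ s ∈ Finset.range (m + 1), h s := by
      rw [Finset.sum_range_succ' f (m+1)]
      simp only [e2, e3, Finset.sum_add_distrib]
      rw [add_right_comm, ← Finset.sum_range_succ' g (m+1), Finset.sum_range_succ g (m+1), e4,
        add_zero]
    have hsum_h : ∀ s ∈ Finset.range (m+1), h s
        = -(b/c) * ((-1) ^ s * (m.choose s : ℝ) * (ascPochhammer ℝ s).eval (b+1)
            / (ascPochhammer ℝ s).eval (c+1)) := by
      intro s hs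
      have hs' : s ≤ m := by simpa [Nat.lt_succ_iff] using hs
      have hCs : (ascPochhammer ℝ s).eval (c+1) ≠ 0 :=
        asc_ne_zero (fun j hj => hc' j (lt_of_lt_of_le hj hs'))
      simp only [hh]
      rw [asc_succ_eval' s b, asc_succ_eval' s c]
      field_simp
      ring
    have ih2 := ih (b+1) (c+1) hc'
    have hsub : c + 1 - (b + 1) = c - b := by ring
    rw [hsub] at ih2
    rw [key, ih b c hcm, Finset.sum_congr rfl hsum_h, ← Finset.mul_sum, ih2]
    rw [ascPochhammer_succ_eval, ascPochhammer_succ_eval]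
    have hrel : c * (ascPochhammer ℝ m).eval (c + 1)
        = (ascPochhammer ℝ m).eval c * (c + m) := by
      rw [← asc_succ_eval' m c, ascPochhammer_succ_eval]
    field_simp
    linear_combination b * (ascPochhammer ℝ m).eval (c - b) * hrel

theorem pochhammer_ratio_sum_identity (μ : ℝ) (hμ : ∀ j : ℕ, μ + 1/2 ≠ -(j : ℝ))
    (n k ε : ℕ) (hk : k ≤ n) (hε : ε ≤ 1) :
    (ascPochhammer ℝ (k + ε)).eval (1/2) / (ascPochhammer ℝ (k + ε)).eval (μ + 1/2)
    = (ascPochhammer ℝ (n + ε)).eval (1/2) / (ascPochhammer ℝ (n + ε)).eval (μ + 1/2)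
      * ∑ s ∈ Finset.range (n - k + 1),
          (ascPochhammer ℝ s).eval μ * (ascPochhammer ℝ s).eval (-(n : ℝ) + k)
            / ((Nat.factorial s : ℝ) * (ascPochhammer ℝ s).eval (-(n : ℝ) - ε + 1/2)) := by
  have hμ' : ∀ j : ℕ, μ + 1/2 + (j : ℝ) ≠ 0 := by
    intro j h0
    exact hμ j (by linarith)
  set m := n - k with hm
  have hmn : (m : ℝ) = (n : ℝ) - k := by rw [hm, Nat.cast_sub hk]
  set c : ℝ := -(n : ℝ) - ε + 1/2 with hcdef
  have hcnz : ∀ j : ℕ, c + (j : ℝ) ≠ 0 := by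
    intro j h0
    rw [hcdef] at h0
    have h2 : ((2*j+1 : ℕ) : ℝ) = ((2*(n+ε) : ℕ) : ℝ) := by push_cast; linarith
    have h3 : (2*j+1 : ℕ) = 2*(n+ε) := by exact_mod_cast h2
    omega
  have hsum : ∀ s ∈ Finset.range (m+1),
      (ascPochhammer ℝ s).eval μ * (ascPochhammer ℝ s).eval (-(n : ℝ) + k)
        / ((Nat.factorial s : ℝ) * (ascPochhammer ℝ s).eval c)
      = (-1)^s * (m.choose s : ℝ) * (ascPochhammer ℝ s).eval μ / (ascPochhammer ℝ s).eval c := by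
    intro s _
    have hneg : (-(n : ℝ) + k) = -((m : ℕ) : ℝ) := by rw [hmn]; ring
    rw [hneg, ascPochhammer_eval_neg_eq_descPochhammer (R := ℝ) ((m : ℕ) : ℝ) s,
        descPochhammer_eval_eq_descFactorial, Nat.descFactorial_eq_factorial_mul_choose]
    have hf : ((s.factorial : ℕ) : ℝ) ≠ 0 := Nat.cast_ne_zero.mpr s.factorial_ne_zero
    have hCs : (ascPochhammer ℝ s).eval c ≠ 0 := asc_ne_zero (fun j _ => hcnz j)
    push_cast
    field_simp
  rw [Finset.sum_congr rfl hsum, chu_vandermonde m μ c (fun j _ => hcnz j)]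
  have hnk : n + ε = (k + ε) + m := by omega
  rw [hnk, asc_add_eval (k+ε) m (1/2 : ℝ), asc_add_eval (k+ε) m (μ+1/2)]
  have hrefl1 : (ascPochhammer ℝ m).eval c
      = (-1)^m * (ascPochhammer ℝ m).eval (1/2 + ((k + ε : ℕ) : ℝ)) := by
    rw [asc_reflect m c]
    congr 2
    rw [hcdef, hmn]
    push_cast
    ring
  have hrefl2 : (ascPochhammer ℝ m).eval (c - μ)
      = (-1)^m * (ascPochhammer ℝ m).eval (μ + 1/2 + ((k + ε : ℕ) : ℝ)) := by
    rw [asc_reflect m (c - μ)]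
    congr 2
    rw [hcdef, hmn]
    push_cast
    ring
  have hb0 : (ascPochhammer ℝ (k + ε)).eval (μ + 1/2) ≠ 0 :=
    asc_ne_zero (fun j _ => hμ' j)
  have hq : (ascPochhammer ℝ m).eval (μ + 1/2 + ((k + ε : ℕ) : ℝ)) ≠ 0 := by
    refine asc_ne_zero (fun j _ h0 => ?_)
    apply hμ' (k + ε + j)
    push_cast at h0 ⊢
    linarith
  have hp : (ascPochhammer ℝ m).eval (1/2 + ((k + ε : ℕ) : ℝ)) ≠ 0 := by
    refine asc_ne_zero (fun j _ => ?_)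
    positivity
  have hm1 : ((-1 : ℝ))^m ≠ 0 := pow_ne_zero _ (by norm_num)
  have hpq : (ascPochhammer ℝ m).eval (1/2 + ((k + ε : ℕ) : ℝ))
      * (ascPochhammer ℝ m).eval (μ + 1/2 + ((k + ε : ℕ) : ℝ)) ≠ 0 := mul_ne_zero hp hq
  rw [hrefl1, hrefl2, mul_div_mul_left _ _ hm1, div_mul_div_comm,
    show (ascPochhammer ℝ (k+ε)).eval (1/2) * (ascPochhammer ℝ m).eval (1/2 + ((k + ε : ℕ) : ℝ))
        * (ascPochhammer ℝ m).eval (μ + 1/2 + ((k + ε : ℕ) : ℝ))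
      = (ascPochhammer ℝ (k+ε)).eval (1/2) * ((ascPochhammer ℝ m).eval (1/2 + ((k + ε : ℕ) : ℝ))
        * (ascPochhammer ℝ m).eval (μ + 1/2 + ((k + ε : ℕ) : ℝ))) from by ring,
    show (ascPochhammer ℝ (k+ε)).eval (μ+1/2) * (ascPochhammer ℝ m).eval (μ + 1/2 + ((k + ε : ℕ) : ℝ))
        * (ascPochhammer ℝ m).eval (1/2 + ((k + ε : ℕ) : ℝ))
      = (ascPochhammer ℝ (k+ε)).eval (μ+1/2) * ((ascPochhammer ℝ m).eval (1/2 + ((k + ε : ℕ) : ℝ))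
        * (ascPochhammer ℝ m).eval (μ + 1/2 + ((k + ε : ℕ) : ℝ))) from by ring,
    mul_comm ((ascPochhammer ℝ (k+ε)).eval (1/2)), mul_comm ((ascPochhammer ℝ (k+ε)).eval (μ+1/2)),
    mul_div_mul_left _ _ hpq]
end

section
/- Let μ be a real parameter with μ + 1/2 not a non-positive integer, and define the Dunkl intertwining operator V_μ on polynomials by its action on monomials: V_μ(x^{2n+ε}) = [(1/2)_{n+ε} / (μ + 1/2)_{n+ε}] x^{2n+ε} for ε ∈ {0,1}. Then for the physicists' Hermite polynomials, V_μ H_{2n+ε}(x) = [(1/2)_{n+ε} / (μ + 1/2)_{n+ε}] Σ_{ℓ=0}^{n} (-1)^ℓ 2^{2ℓ} binom(n, ℓ) (μ)_ℓ H_{2(n-ℓ)+ε}(x). -/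
open Polynomial in
noncomputable def hermiteP : ℕ → Polynomial ℝ
  | 0 => 1
  | 1 => 2 * X
  | (n + 2) => 2 * X * hermiteP (n + 1) - C (2 * ((n : ℝ) + 1)) * hermiteP n

open Finset Polynomial


noncomputable def A (x : ℝ) (m : ℕ) : ℝ := (ascPochhammer ℝ m).eval x

lemma A_zero (x : ℝ) : A x 0 = 1 := by simp [A]
lemma A_succ (x : ℝ) (m : ℕ) : A x (m+1) = A x m * (x + m) := by
  simp [A, ascPochhammer_succ_eval]

lemma A_add (x : ℝ) (m k : ℕ) : A x (m + k) = A x m * A (x + m) k := by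
  rw [A, ← ascPochhammer_mul]
  simp [A, eval_comp]

lemma A_pos (x : ℝ) (hx : 0 < x) (m : ℕ) : 0 < A x m := ascPochhammer_pos m x hx

lemma vander (a b : ℝ) : ∀ M : ℕ, A (a+b) M
    = ∑ ℓ ∈ range (M+1), (M.choose ℓ : ℝ) * (A a ℓ * A b (M - ℓ)) := by
  intro M
  induction M with
  | zero => simp [A_zero]
  | succ M ih =>
    rw [sum_choose_succ_mul (fun i j => A a i * A b j) M, A_succ, ih, Finset.sum_mul,
      ← Finset.sum_add_distrib]
    refine Finset.sum_congr rfl fun i hi => ?_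
    have hiM : i ≤ M := by simpa [Nat.lt_succ_iff] using hi
    have h1 : M + 1 - i = (M - i) + 1 := by omega
    have h2 : ((M - i : ℕ) : ℝ) = (M : ℝ) - i := by
      have := Nat.cast_sub (R := ℝ) hiM; linarith [this]
    rw [h1, A_succ, A_succ]
    ring_nf
    rw [h2]
    ring

lemma tri {M : Type*} [AddCommMonoid M] (n : ℕ) (f : ℕ → ℕ → M) :
    ∑ ℓ ∈ range (n+1), ∑ k ∈ range (n+1-ℓ), f ℓ k
      = ∑ k ∈ range (n+1), ∑ ℓ ∈ range (n+1-k), f ℓ k := by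
  rw [Finset.sum_sigma', Finset.sum_sigma']
  refine sum_nbij' (fun x => ⟨x.2, x.1⟩) (fun x => ⟨x.2, x.1⟩) ?_ ?_ (fun _ _ => rfl)
    (fun _ _ => rfl) (fun _ _ => rfl) <;>
  · rintro ⟨a, b⟩ h
    simp only [mem_sigma, mem_range] at *
    omega

lemma fact2 (ε : ℕ) (hε : ε ≤ 1) : ∀ m : ℕ,
    ((2*m+ε).factorial : ℝ) = 4^m * m.factorial * A (1/2 + ε) m := by
  intro m
  induction m with
  | zero => interval_cases ε <;> simp [A_zero, Nat.factorial]
  | succ m ih =>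
    have h1 : 2*(m+1)+ε = (2*m+ε+1)+1 := by ring
    rw [h1, Nat.factorial_succ, Nat.factorial_succ, A_succ, Nat.factorial_succ]
    push_cast
    rw [ih]
    interval_cases ε <;> push_cast <;> ring

lemma A_half_ne (μ : ℝ) (hμ : ∀ j : ℕ, μ + 1/2 ≠ -(j : ℝ)) (m : ℕ) :
    A (μ + 1/2) m ≠ 0 := by
  induction m with
  | zero => simp [A_zero]
  | succ m ih =>
    rw [A_succ]
    exact mul_ne_zero ih (fun h => hμ m (by linarith [h]))

lemma A_tail_ne (μ : ℝ) (hμ : ∀ j : ℕ, μ + 1/2 ≠ -(j : ℝ)) (e k : ℕ) :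
    A (μ + 1/2 + e) k ≠ 0 := by
  have := A_half_ne μ hμ (e + k)
  rw [A_add] at this
  exact fun h => this (by rw [h, mul_zero])

noncomputable def ha (n k ε : ℕ) : ℝ :=
  (-1)^(n-k) * (2*n+ε).factorial * 2^(2*k+ε) / ((n-k).factorial * (2*k+ε).factorial)

lemma L1 (n : ℕ) : ha (n+1) (n+1) 0 = 2 * ha n n 1 := by
  simp only [ha, Nat.sub_self, Nat.add_sub_cancel, pow_zero, Nat.factorial_zero]
  have A1 : ((2*(n+1)+0).factorial : ℝ) = (2*(n:ℝ)+2)*(2*n+1).factorial := by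
    rw [show 2*(n+1)+0 = (2*n+1)+1 from by omega, Nat.factorial_succ]; push_cast; ring
  rw [A1]
  have h : ((2*n+1).factorial : ℝ) ≠ 0 := by positivity
  field_simp
  ring

lemma L3 (n : ℕ) : ha (n+1) 0 0 = -(2*(2*(n:ℝ)+1) * ha n 0 0) := by
  simp only [ha, Nat.sub_zero]
  have A1 : ((2*(n+1)+0).factorial : ℝ)
      = (2*(n:ℝ)+2)*((2*(n:ℝ)+1)*(2*n+0).factorial) := by
    rw [show 2*(n+1)+0 = ((2*n+0)+1)+1 from by omega, Nat.factorial_succ, Nat.factorial_succ]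
    push_cast; ring
  have A2 : ((n+1).factorial : ℝ) = ((n:ℝ)+1)*n.factorial := by
    rw [Nat.factorial_succ]; push_cast; ring
  rw [A1, A2]
  have h1 : ((2*n+0).factorial : ℝ) ≠ 0 := by positivity
  have h2 : ((n).factorial : ℝ) ≠ 0 := by positivity
  have h3 : ((n:ℝ)+1) ≠ 0 := by positivity
  field_simp
  ring

lemma L2 (k d : ℕ) : ha (k+d+2) (k+1) 0
    = 2 * ha (k+d+1) k 1 - 2*(2*((k:ℝ)+d+1)+1) * ha (k+d+1) (k+1) 0 := by
  simp only [ha]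
  rw [show k+d+2-(k+1) = d+1 from by omega, show k+d+1-k = d+1 from by omega,
    show k+d+1-(k+1) = d from by omega]
  have A1 : ((2*(k+d+2)+0).factorial : ℝ)
      = (2*(k:ℝ)+2*d+4)*((2*(k:ℝ)+2*d+3)*(2*(k+d+1)+0).factorial) := by
    rw [show 2*(k+d+2)+0 = ((2*(k+d+1)+0)+1)+1 from by omega, Nat.factorial_succ,
      Nat.factorial_succ]
    push_cast; ring
  have A2 : ((2*(k+d+1)+1).factorial : ℝ) = (2*(k:ℝ)+2*d+3)*(2*(k+d+1)+0).factorial := by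
    rw [show 2*(k+d+1)+1 = (2*(k+d+1)+0)+1 from by omega, Nat.factorial_succ]; push_cast; ring
  have A3 : ((d+1).factorial : ℝ) = ((d:ℝ)+1)*d.factorial := by
    rw [Nat.factorial_succ]; push_cast; ring
  have A4 : ((2*(k+1)+0).factorial : ℝ) = (2*(k:ℝ)+2)*(2*k+1).factorial := by
    rw [show 2*(k+1)+0 = (2*k+1)+1 from by omega, Nat.factorial_succ]; push_cast; ring
  rw [A1, A2, A3, A4]
  have h1 : ((2*(k+d+1)+0).factorial : ℝ) ≠ 0 := by positivity
  have h2 : ((2*k+1).factorial : ℝ) ≠ 0 := by positivity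
  have h3 : ((d).factorial : ℝ) ≠ 0 := by positivity
  have h4 : ((d:ℝ)+1) ≠ 0 := by positivity
  field_simp
  ring

lemma L4 (n : ℕ) : ha (n+1) (n+1) 1 = 2 * ha (n+1) (n+1) 0 := by
  simp only [ha, Nat.sub_self, pow_zero, Nat.factorial_zero]
  have A1 : ((2*(n+1)+1).factorial : ℝ) = (2*(n:ℝ)+3)*(2*(n+1)+0).factorial := by
    rw [show 2*(n+1)+1 = (2*(n+1)+0)+1 from by omega, Nat.factorial_succ]; push_cast; ring
  rw [A1]
  have h : ((2*(n+1)+0).factorial : ℝ) ≠ 0 := by positivity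
  field_simp
  ring

lemma L5 (k d : ℕ) : ha (k+d+1) k 1
    = 2 * ha (k+d+1) k 0 - 2*(2*((k:ℝ)+d)+2) * ha (k+d) k 1 := by
  simp only [ha]
  rw [show k+d+1-k = d+1 from by omega, show k+d-k = d from by omega]
  have A1 : ((2*(k+d+1)+1).factorial : ℝ)
      = (2*(k:ℝ)+2*d+3)*((2*(k:ℝ)+2*d+2)*(2*(k+d)+1).factorial) := by
    rw [show 2*(k+d+1)+1 = ((2*(k+d)+1)+1)+1 from by omega, Nat.factorial_succ,
      Nat.factorial_succ]
    push_cast; ring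
  have A2 : ((2*(k+d+1)+0).factorial : ℝ) = (2*(k:ℝ)+2*d+2)*(2*(k+d)+1).factorial := by
    rw [show 2*(k+d+1)+0 = (2*(k+d)+1)+1 from by omega, Nat.factorial_succ]; push_cast; ring
  have A3 : ((d+1).factorial : ℝ) = ((d:ℝ)+1)*d.factorial := by
    rw [Nat.factorial_succ]; push_cast; ring
  have A4 : ((2*k+1).factorial : ℝ) = (2*(k:ℝ)+1)*(2*k+0).factorial := by
    rw [show 2*k+1 = (2*k+0)+1 from by omega, Nat.factorial_succ]; push_cast; ring
  rw [A1, A2, A3, A4]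
  have h1 : ((2*(k+d)+1).factorial : ℝ) ≠ 0 := by positivity
  have h2 : ((2*k+0).factorial : ℝ) ≠ 0 := by positivity
  have h3 : ((d).factorial : ℝ) ≠ 0 := by positivity
  have h4 : ((d:ℝ)+1) ≠ 0 := by positivity
  field_simp
  ring
lemma evenStep (n : ℕ)
    (he : hermiteP (2*n) = ∑ k ∈ range (n+1), C (ha n k 0) * X^(2*k))
    (ho : hermiteP (2*n+1) = ∑ k ∈ range (n+1), C (ha n k 1) * X^(2*k+1)) :
    hermiteP (2*(n+1)) = ∑ k ∈ range (n+2), C (ha (n+1) k 0) * X^(2*k) := by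
  have hrec : hermiteP (2*(n+1))
      = 2 * X * hermiteP (2*n+1) - C (2 * ((2*n : ℝ) + 1)) * hermiteP (2*n) := by
    rw [show 2*(n+1) = 2*n+2 from rfl, hermiteP]; norm_num
  rw [hrec, he, ho]
  have step1 : (2 * X : Polynomial ℝ) * (∑ k ∈ range (n+1), C (ha n k 1) * X^(2*k+1))
      = ∑ k ∈ range (n+1), C (2 * ha n k 1) * X^(2*(k+1)) := by
    rw [Finset.mul_sum]
    exact Finset.sum_congr rfl fun k _ => by rw [map_mul, map_ofNat]; ring
  have step2 : C (2 * ((2*n : ℝ) + 1)) * (∑ k ∈ range (n+1), C (ha n k 0) * X^(2*k))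
      = ∑ k ∈ range (n+1), C (2 * (2*(n:ℝ)+1) * ha n k 0) * X^(2*k) := by
    rw [Finset.mul_sum]
    refine Finset.sum_congr rfl fun k _ => ?_
    rw [← mul_assoc, ← map_mul]
  rw [step1, step2,
    Finset.sum_range_succ' (fun k => C (2 * (2*(n:ℝ)+1) * ha n k 0) * X^(2*k)) n,
    Finset.sum_range_succ (fun k => C (2 * ha n k 1) * X^(2*(k+1))) n,
    Finset.sum_range_succ' (fun k => C (ha (n+1) k 0) * X^(2*k)) (n+1),
    Finset.sum_range_succ (fun k => C (ha (n+1) (k+1) 0) * X^(2*(k+1))) n]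
  have key : ∑ k ∈ range n, C (ha (n+1) (k+1) 0) * X^(2*(k+1))
      = ∑ k ∈ range n, (C (2 * ha n k 1) * X^(2*(k+1)) - C (2 * (2*(n:ℝ)+1) * ha n (k+1) 0) * X^(2*(k+1))) := by
    refine Finset.sum_congr rfl fun k hk => ?_
    rw [← sub_mul, ← map_sub]
    obtain ⟨d, rfl⟩ : ∃ d, n = k + d + 1 := ⟨n - k - 1, by have := mem_range.mp hk; omega⟩
    congr 2
    rw [L2 k d]
    push_cast
    ring
  rw [key, Finset.sum_sub_distrib, L1, L3, map_neg]
  ring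

lemma oddStep (n : ℕ)
    (ho : hermiteP (2*n+1) = ∑ k ∈ range (n+1), C (ha n k 1) * X^(2*k+1))
    (he1 : hermiteP (2*(n+1)) = ∑ k ∈ range (n+2), C (ha (n+1) k 0) * X^(2*k)) :
    hermiteP (2*(n+1)+1) = ∑ k ∈ range (n+2), C (ha (n+1) k 1) * X^(2*k+1) := by
  have hrec : hermiteP (2*(n+1)+1)
      = 2 * X * hermiteP (2*(n+1)) - C (2 * ((2*n : ℝ) + 2)) * hermiteP (2*n+1) := by
    rw [show 2*(n+1)+1 = (2*n+1)+2 from rfl, hermiteP]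
    push_cast
    ring_nf
  rw [hrec, ho, he1]
  have step1 : (2 * X : Polynomial ℝ) * (∑ k ∈ range (n+2), C (ha (n+1) k 0) * X^(2*k))
      = ∑ k ∈ range (n+2), C (2 * ha (n+1) k 0) * X^(2*k+1) := by
    rw [Finset.mul_sum]
    exact Finset.sum_congr rfl fun k _ => by rw [map_mul, map_ofNat]; ring
  have step2 : C (2 * ((2*n : ℝ) + 2)) * (∑ k ∈ range (n+1), C (ha n k 1) * X^(2*k+1))
      = ∑ k ∈ range (n+1), C (2 * (2*(n:ℝ)+2) * ha n k 1) * X^(2*k+1) := by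
    rw [Finset.mul_sum]
    refine Finset.sum_congr rfl fun k _ => ?_
    rw [← mul_assoc, ← map_mul]
  rw [step1, step2,
    Finset.sum_range_succ (fun k => C (2 * ha (n+1) k 0) * X^(2*k+1)) (n+1),
    Finset.sum_range_succ (fun k => C (ha (n+1) k 1) * X^(2*k+1)) (n+1)]
  have key : ∑ k ∈ range (n+1), C (ha (n+1) k 1) * X^(2*k+1)
      = ∑ k ∈ range (n+1), (C (2 * ha (n+1) k 0) * X^(2*k+1)
          - C (2 * (2*(n:ℝ)+2) * ha n k 1) * X^(2*k+1)) := by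
    refine Finset.sum_congr rfl fun k hk => ?_
    rw [← sub_mul, ← map_sub]
    obtain ⟨d, rfl⟩ : ∃ d, n = k + d := ⟨n - k, by have := mem_range.mp hk; omega⟩
    congr 2
    rw [L5 k d]
    push_cast
    ring
  rw [key, Finset.sum_sub_distrib, L4]
  ring

lemma hermExp (n : ℕ) :
    hermiteP (2*n) = ∑ k ∈ range (n+1), C (ha n k 0) * X^(2*k) ∧
    hermiteP (2*n+1) = ∑ k ∈ range (n+1), C (ha n k 1) * X^(2*k+1) := by
  induction n with
  | zero =>
    refine ⟨by norm_num [hermiteP, ha, Nat.factorial], ?_⟩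
    norm_num [hermiteP, ha, Nat.factorial]
    exact (map_ofNat C 2).symm
  | succ n ih =>
    exact ⟨evenStep n ih.1 ih.2, oddStep n ih.2 (evenStep n ih.1 ih.2)⟩
lemma sumStep (μ : ℝ) (ε : ℕ) (hε : ε ≤ 1) (k M : ℕ) :
    ∑ ℓ ∈ range (M+1),
        ((-1)^ℓ * 2^(2*ℓ) * ((k+M).choose ℓ : ℝ) * A μ ℓ) * ha ((k+M)-ℓ) k ε
      = ((-1)^M * 4^(k+M) * 2^(2*k+ε) * (k+M).factorial
            / (M.factorial * (2*k+ε).factorial) * A (1/2+ε) k)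
          * ∑ ℓ ∈ range (M+1), (M.choose ℓ : ℝ) * (A μ ℓ * A (1/2+ε+k) (M-ℓ)) := by
  rw [Finset.mul_sum]
  refine Finset.sum_congr rfl fun ℓ hℓ => ?_
  have hℓM : ℓ ≤ M := by simpa [Nat.lt_succ_iff] using hℓ
  obtain ⟨j, rfl⟩ : ∃ j, M = ℓ + j := ⟨M - ℓ, by omega⟩
  rw [show (k+(ℓ+j))-ℓ = k+j from by omega, show (ℓ+j)-ℓ = j from by omega]
  rw [ha, show (k+j)-k = j from by omega, fact2 ε hε (k+j),
    show A (1/2+ε) (k+j) = A (1/2+ε) k * A (1/2+ε+k) j from A_add _ _ _]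
  have g1 : (k+(ℓ+j)).choose ℓ * ℓ.factorial * (k+j).factorial = (k+(ℓ+j)).factorial := by
    have h := Nat.choose_mul_factorial_mul_factorial (show ℓ ≤ k+(ℓ+j) from by omega)
    rwa [show k+(ℓ+j)-ℓ = k+j from by omega] at h
  have g2 : (ℓ+j).choose ℓ * ℓ.factorial * j.factorial = (ℓ+j).factorial := by
    have h := Nat.choose_mul_factorial_mul_factorial (show ℓ ≤ ℓ+j from by omega)
    rwa [show ℓ+j-ℓ = j from by omega] at h
  have c1 : (((k+(ℓ+j)).choose ℓ : ℕ) : ℝ) * ((k+j).factorial) * ((ℓ+j).factorial)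
      = (((ℓ+j).choose ℓ : ℕ) : ℝ) * ((k+(ℓ+j)).factorial) * (j.factorial) := by
    have e1 : (k+(ℓ+j)).choose ℓ * ((k+j).factorial) * ((ℓ+j).factorial)
        = ((ℓ+j).choose ℓ) * ((k+(ℓ+j)).factorial) * (j.factorial) := by
      refine Nat.eq_of_mul_eq_mul_left (Nat.factorial_pos ℓ) ?_
      calc ℓ.factorial * ((k+(ℓ+j)).choose ℓ * ((k+j).factorial) * ((ℓ+j).factorial))
          = ((k+(ℓ+j)).choose ℓ * ℓ.factorial * (k+j).factorial) * (ℓ+j).factorial := by ring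
        _ = (k+(ℓ+j)).factorial * (ℓ+j).factorial := by rw [g1]
        _ = (k+(ℓ+j)).factorial * ((ℓ+j).choose ℓ * ℓ.factorial * j.factorial) := by rw [g2]
        _ = ℓ.factorial * ((ℓ+j).choose ℓ * ((k+(ℓ+j)).factorial) * (j.factorial)) := by ring
    exact_mod_cast congrArg (fun x : ℕ => (x : ℝ)) e1
  set a1 := A μ ℓ with ha1
  set a2 := A (1/2+(ε:ℝ)) k with ha2
  set a3 := A (1/2+(ε:ℝ)+(k:ℝ)) j with ha3
  have hMf : (((ℓ+j).factorial : ℕ) : ℝ) ≠ 0 := by positivity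
  have hjf : ((j.factorial : ℕ) : ℝ) ≠ 0 := by positivity
  have h2k : (((2*k+ε).factorial : ℕ) : ℝ) ≠ 0 := by positivity
  rw [show (2:ℝ)^(2*ℓ) = 4^ℓ from by rw [pow_mul]; norm_num]
  field_simp
  linear_combination ((-1:ℝ)^ℓ * (-1)^j * 4^ℓ * 4^k * 4^j * a1 * a2 * a3) * c1

lemma A_tail2_ne (μ : ℝ) (hμ : ∀ j : ℕ, μ + 1/2 ≠ -(j : ℝ)) (e f k : ℕ) :
    A (μ + 1/2 + e + f) k ≠ 0 := by
  have h := A_half_ne μ hμ (e+(f+k))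
  rw [A_add, A_add] at h
  intro hz
  rw [hz] at h
  simp at h

lemma keyScalar (μ : ℝ) (hμ : ∀ j : ℕ, μ + 1/2 ≠ -(j : ℝ)) (ε : ℕ) (hε : ε ≤ 1)
    (k M : ℕ) :
    ha (k+M) k ε * (A (1/2) (k+ε) / A (μ+1/2) (k+ε))
      = (A (1/2) ((k+M)+ε) / A (μ+1/2) ((k+M)+ε)) *
        ∑ ℓ ∈ range (M+1),
          ((-1)^ℓ * 2^(2*ℓ) * ((k+M).choose ℓ : ℝ) * A μ ℓ) * ha ((k+M)-ℓ) k ε := by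
  rw [sumStep μ ε hε k M, ← vander μ (1/2+(ε:ℝ)+(k:ℝ)) M]
  rw [show μ+(1/2+(ε:ℝ)+(k:ℝ)) = μ+1/2+(ε:ℝ)+(k:ℝ) from by ring]
  rw [ha, show (k+M)-k = M from by omega, fact2 ε hε (k+M)]
  rw [show k+ε = ε+k from by omega, show (k+M)+ε = ε+(k+M) from by omega]
  rw [A_add (1/2) ε k, A_add (μ+1/2) ε k, A_add (1/2) ε (k+M), A_add (μ+1/2) ε (k+M),
    A_add (1/2+(ε:ℝ)) k M, A_add (μ+1/2+(ε:ℝ)) k M]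
  have n1 : A (μ+1/2) ε ≠ 0 := A_half_ne μ hμ ε
  have n2 : A (μ+1/2+(ε:ℝ)) k ≠ 0 := A_tail_ne μ hμ ε k
  have n3 : A (μ+1/2+(ε:ℝ)+(k:ℝ)) M ≠ 0 := A_tail2_ne μ hμ ε k M
  set b1 := A (1/2) ε
  set b2 := A ((1:ℝ)/2+ε) k
  set b3 := A ((1:ℝ)/2+(ε:ℝ)+(k:ℝ)) M
  set d1 := A (μ+1/2) ε
  set d2 := A (μ+1/2+(ε:ℝ)) k
  set d3 := A (μ+1/2+(ε:ℝ)+(k:ℝ)) M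
  have hMf : ((M.factorial : ℕ) : ℝ) ≠ 0 := by positivity
  have h2k : (((2*k+ε).factorial : ℕ) : ℝ) ≠ 0 := by positivity
  field_simp

theorem dunkl_intertwiner_on_hermite (μ : ℝ) (hμ : ∀ j : ℕ, μ + 1/2 ≠ -(j : ℝ))
    (V : Polynomial ℝ →ₗ[ℝ] Polynomial ℝ)
    (hV : ∀ m ε : ℕ, ε ≤ 1 →
      V (X^(2*m + ε))
        = C ((ascPochhammer ℝ (m + ε)).eval (1/2)
              / (ascPochhammer ℝ (m + ε)).eval (μ + 1/2)) * X^(2*m + ε))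
    (n ε : ℕ) (hε : ε ≤ 1) :
    V (hermiteP (2*n + ε))
    = C ((ascPochhammer ℝ (n + ε)).eval (1/2)
          / (ascPochhammer ℝ (n + ε)).eval (μ + 1/2))
        * ∑ ℓ ∈ Finset.range (n + 1),
            C ((-1)^ℓ * 2^(2*ℓ) * (n.choose ℓ : ℝ) * (ascPochhammer ℝ ℓ).eval μ)
              * hermiteP (2*(n - ℓ) + ε) := by
  have A_def : ∀ (x : ℝ) (m : ℕ), (ascPochhammer ℝ m).eval x = A x m := fun _ _ => rfl
  simp only [A_def]
  have hermE : ∀ m : ℕ, hermiteP (2*m+ε) = ∑ k ∈ range (m+1), C (ha m k ε) * X^(2*k+ε) := by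
    intro m
    interval_cases ε
    · simpa using (hermExp m).1
    · exact (hermExp m).2
  have hterm : ∀ k, V (C (ha n k ε) * X^(2*k+ε))
      = C (ha n k ε * (A (1/2) (k+ε) / A (μ+1/2) (k+ε))) * X^(2*k+ε) := by
    intro k
    rw [← smul_eq_C_mul, map_smul, hV k ε hε, smul_eq_C_mul, ← mul_assoc, ← map_mul]
    rfl
  rw [hermE n, map_sum]
  rw [Finset.sum_congr rfl (fun k _ => hterm k)]
  -- transform the RHS
  have hRHS : C (A (1/2) (n+ε) / A (μ+1/2) (n+ε))
        * ∑ ℓ ∈ range (n+1),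
            C ((-1)^ℓ * 2^(2*ℓ) * (n.choose ℓ : ℝ) * A μ ℓ) * hermiteP (2*(n-ℓ)+ε)
      = ∑ ℓ ∈ range (n+1), ∑ k ∈ range (n+1-ℓ),
          C ((A (1/2) (n+ε) / A (μ+1/2) (n+ε))
              * ((-1)^ℓ * 2^(2*ℓ) * (n.choose ℓ : ℝ) * A μ ℓ) * ha (n-ℓ) k ε) * X^(2*k+ε) := by
    rw [Finset.mul_sum]
    refine Finset.sum_congr rfl fun ℓ hℓ => ?_
    have hℓn : ℓ ≤ n := by simpa [Nat.lt_succ_iff] using hℓ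
    rw [hermE (n-ℓ), show (n-ℓ)+1 = n+1-ℓ from by omega, Finset.mul_sum, Finset.mul_sum]
    refine Finset.sum_congr rfl fun k _ => ?_
    rw [← mul_assoc, ← mul_assoc, ← map_mul, ← map_mul]
  rw [hRHS, tri n]
  refine Finset.sum_congr rfl fun k hk => ?_
  rw [← Finset.sum_mul, ← map_sum]
  congr 1
  obtain ⟨M, rfl⟩ : ∃ M, n = k + M := ⟨n - k, by have := mem_range.mp hk; omega⟩
  rw [show k+M+1-k = M+1 from by omega, keyScalar μ hμ ε hε k M, Finset.mul_sum]
  congr 1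
  exact Finset.sum_congr rfl fun ℓ _ => by ring
end

section
/- Let V_μ be the linear operator on real polynomials defined on monomials by V_μ(x^{2n+ε}) = [(1/2)_{n+ε}/(μ+1/2)_{n+ε}] x^{2n+ε} for ε ∈ {0,1}, and let D_μ = d/dx + (μ/x)(1 - R) be the Dunkl operator, where R f(x) = f(-x). Then D_μ V_μ = V_μ d/dx on the space of polynomials. -/
open Polynomial in
noncomputable def dunklOp (μ : ℝ) (p : Polynomial ℝ) : Polynomial ℝ :=
  Polynomial.derivative p + C μ * (p - p.comp (-X)).divX

open Polynomial

lemma dunklOp_add (μ : ℝ) (p q : Polynomial ℝ) :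
    dunklOp μ (p + q) = dunklOp μ p + dunklOp μ q := by
  simp only [dunklOp, derivative_add, add_comp, add_sub_add_comm, divX_add, mul_add]
  ring

lemma dunklOp_smul (μ a : ℝ) (p : Polynomial ℝ) :
    dunklOp μ (a • p) = a • dunklOp μ p := by
  simp only [dunklOp, smul_eq_C_mul, derivative_C_mul, mul_comp, C_comp, ← mul_sub,
    divX_C_mul, mul_add]
  ring

lemma ascPochhammer_ne_zero (μ : ℝ) (hμ : ∀ j : ℕ, μ + 1/2 ≠ -(j : ℝ)) (n : ℕ) :
    (ascPochhammer ℝ n).eval (μ + 1/2) ≠ 0 := by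
  induction n with
  | zero => simp
  | succ k ih =>
    rw [ascPochhammer_succ_eval]
    refine mul_ne_zero ih ?_
    intro h
    exact hμ k (by linarith)

lemma scalar_key (μ : ℝ) (hμ : ∀ j : ℕ, μ + 1/2 ≠ -(j : ℝ)) (m : ℕ) :
    ((ascPochhammer ℝ (m+1)).eval (1/2) / (ascPochhammer ℝ (m+1)).eval (μ + 1/2))
        * (2*(m:ℝ)+1) + μ * (2 *
      ((ascPochhammer ℝ (m+1)).eval (1/2) / (ascPochhammer ℝ (m+1)).eval (μ + 1/2)))
    = (2*(m:ℝ)+1) *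
      ((ascPochhammer ℝ m).eval (1/2) / (ascPochhammer ℝ m).eval (μ + 1/2)) := by
  have hb := ascPochhammer_ne_zero μ hμ m
  have hb2 : μ + 1/2 + (m:ℝ) ≠ 0 := fun h => hμ m (by linarith)
  set a := (ascPochhammer ℝ m).eval (1/2) with ha
  set b := (ascPochhammer ℝ m).eval (μ + 1/2) with hbdef
  set z := μ + 1/2 + (m:ℝ) with hz
  have e1 : (ascPochhammer ℝ (m+1)).eval (1/2) = a * (1/2 + m) :=
    ascPochhammer_succ_eval m (1/2 : ℝ)
  have e2 : (ascPochhammer ℝ (m+1)).eval (μ + 1/2) = b * z :=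
    ascPochhammer_succ_eval m (μ + 1/2 : ℝ)
  rw [e1, e2]
  field_simp
  simp only [hz]
  ring

theorem dunkl_intertwining_property (μ : ℝ) (hμ : ∀ j : ℕ, μ + 1/2 ≠ -(j : ℝ))
    (V : Polynomial ℝ →ₗ[ℝ] Polynomial ℝ)
    (hV : ∀ m ε : ℕ, ε ≤ 1 →
      V (X^(2*m + ε))
        = C ((ascPochhammer ℝ (m + ε)).eval (1/2)
              / (ascPochhammer ℝ (m + ε)).eval (μ + 1/2)) * X^(2*m + ε)) :
    ∀ p : Polynomial ℝ, dunklOp μ (V p) = V (Polynomial.derivative p) := by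
  have key : ∀ n : ℕ, dunklOp μ (V (X ^ n)) = V (derivative (X ^ n)) := by
    intro n
    obtain ⟨m, ε, hε, rfl⟩ : ∃ m ε, ε ≤ 1 ∧ n = 2*m + ε :=
      ⟨n/2, n%2, by omega, by omega⟩
    interval_cases ε
    · -- even case n = 2m
      rcases Nat.eq_zero_or_pos m with rfl | hmpos
      · have h0 := hV 0 0 (by norm_num)
        norm_num at h0 ⊢
        rw [h0]
        simp [dunklOp]
      · obtain ⟨k, rfl⟩ : ∃ k, m = k + 1 := ⟨m - 1, by omega⟩
        have h0 := hV (k+1) 0 (by norm_num)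
        have h1 := hV k 1 (by norm_num)
        rw [show 2*(k+1)+0 = 2*k+2 by ring, show k+1+0 = k+1 from rfl] at h0
        rw [show 2*(k+1)+0 = 2*k+2 by ring, h0]
        set c := (ascPochhammer ℝ (k+1)).eval (1/2) /
          (ascPochhammer ℝ (k+1)).eval (μ + 1/2) with hc
        have hcomp : ((C c * X ^ (2*k+2)).comp (-X) : Polynomial ℝ)
            = C c * X ^ (2*k+2) := by
          rw [mul_comp, C_comp, pow_comp, X_comp, show 2*k+2 = 2*(k+1) by ring,
            pow_mul, neg_pow_two, ← pow_mul]
        rw [dunklOp, hcomp, sub_self, divX_zero, mul_zero, add_zero,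
          derivative_C_mul, derivative_X_pow]
        rw [show (2*k+2)-1 = 2*k+1 from rfl]
        have hR : V (C ((2*k+2 : ℕ) : ℝ) * X ^ (2*k+1))
            = C ((2*k+2 : ℕ) : ℝ) * (C c * X ^ (2*k+1)) := by
          rw [← smul_eq_C_mul, map_smul, h1, smul_eq_C_mul]
        rw [hR]
        ring
    · -- odd case n = 2m+1
      have h1 := hV m 1 (by norm_num)
      have h0 := hV m 0 (by norm_num)
      rw [show m+0 = m from rfl, show 2*m+0 = 2*m by ring] at h0
      rw [h1]
      set c1 := (ascPochhammer ℝ (m+1)).eval (1/2) /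
        (ascPochhammer ℝ (m+1)).eval (μ + 1/2) with hc1
      set c0 := (ascPochhammer ℝ m).eval (1/2) /
        (ascPochhammer ℝ m).eval (μ + 1/2) with hc0
      have hcomp : ((C c1 * X ^ (2*m+1)).comp (-X) : Polynomial ℝ)
          = -(C c1 * X ^ (2*m+1)) := by
        rw [mul_comp, C_comp, pow_comp, X_comp, pow_succ, pow_mul, neg_pow_two,
          ← pow_mul]
        ring
      have h2 : C c1 * X ^ (2*m+1) - -(C c1 * X ^ (2*m+1))
          = C (2*c1) * X ^ (2*m+1) := by
        rw [C_mul, map_ofNat]; ring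
      rw [dunklOp, hcomp, h2, divX_C_mul, divX_X_pow,
        if_neg (by omega : ¬ 2*m+1 = 0), Nat.add_sub_cancel,
        derivative_C_mul, derivative_X_pow, Nat.add_sub_cancel]
      have hR : V (C ((2*m+1 : ℕ) : ℝ) * X ^ (2*m))
          = C ((2*m+1 : ℕ) : ℝ) * (C c0 * X ^ (2*m)) := by
        rw [← smul_eq_C_mul, map_smul, h0, smul_eq_C_mul]
      rw [hR]
      have hL : C c1 * (C ((2*m+1 : ℕ) : ℝ) * X ^ (2*m))
            + C μ * (C (2*c1) * X ^ (2*m))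
          = C (c1 * ((2*m+1 : ℕ) : ℝ) + μ * (2*c1)) * X ^ (2*m) := by
        simp only [C_add, C_mul]; ring
      rw [hL, show C ((2*m+1 : ℕ) : ℝ) * (C c0 * X ^ (2*m))
          = C (((2*m+1 : ℕ) : ℝ) * c0) * X ^ (2*m) by rw [C_mul]; ring]
      congr 1
      rw [C_inj]
      push_cast
      have := scalar_key μ hμ m
      rw [← hc1, ← hc0] at this
      linarith
  intro p
  induction p using Polynomial.induction_on' with
  | add p q hp hq => rw [map_add, dunklOp_add, hp, hq, map_add, map_add]
  | monomial n a =>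
    rw [← C_mul_X_pow_eq_monomial, ← smul_eq_C_mul, map_smul, dunklOp_smul, key,
      ← map_smul, derivative_smul, map_smul]
end

section
/- For ε = 1, the action of V_μ on the odd Hermite polynomial gives the generalized Hermite polynomial expressed via Laguerre polynomials: V_μ H_{2n+1}(x) = (-1)^n (2n+1)! / (μ + 1/2)_{n+1} · x · L_n^{(μ+1/2)}(x²), where V_μ(x^{2k+1}) = [(1/2)_{k+1}/(μ+1/2)_{k+1}] x^{2k+1}. -/
open Polynomial in
noncomputable def laguerreP (α : ℝ) (n : ℕ) : Polynomial ℝ :=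
  C ((ascPochhammer ℝ n).eval (α + 1) / (Nat.factorial n : ℝ)) *
    ∑ k ∈ Finset.range (n + 1),
      C ((ascPochhammer ℝ k).eval (-(n : ℝ))
          / ((ascPochhammer ℝ k).eval (α + 1) * (Nat.factorial k : ℝ))) * X^k

open Finset Polynomial

noncomputable def aC (n k : ℕ) : ℝ :=
  (-1)^(n-k) * ((2*n+1).factorial) * 2^(2*k+1) / ((n-k).factorial * (2*k+1).factorial)
noncomputable def bC (n k : ℕ) : ℝ :=
  (-1)^(n-k) * ((2*n).factorial) * 2^(2*k) / ((n-k).factorial * (2*k).factorial)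

lemma hermite_rec (n : ℕ) :
    hermiteP (2*n+2) = 2 * X * hermiteP (2*n+1) - C (2*((2*n : ℝ)+1)) * hermiteP (2*n) := by
  rw [show 2*n+2 = (2*n)+2 from rfl, hermiteP]
  push_cast; ring_nf

lemma hermite_rec' (n : ℕ) :
    hermiteP (2*n+3) = 2 * X * hermiteP (2*n+2) - C (2*((2*n : ℝ)+2)) * hermiteP (2*n+1) := by
  rw [show 2*n+3 = (2*n+1)+2 from rfl, hermiteP]
  push_cast; ring_nf

lemma factR (m : ℕ) : ((m+1).factorial : ℝ) = (m+1) * m.factorial := by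
  push_cast [Nat.factorial_succ]; ring

lemma factNe (m : ℕ) : (m.factorial : ℝ) ≠ 0 := by exact_mod_cast m.factorial_ne_zero

lemma pochR (x : ℝ) (m : ℕ) :
    (ascPochhammer ℝ (m+1)).eval x = (ascPochhammer ℝ m).eval x * (x + m) := by
  simp [ascPochhammer_succ_right]

lemma pochL (x : ℝ) (m : ℕ) :
    (ascPochhammer ℝ (m+1)).eval x = x * (ascPochhammer ℝ m).eval (x+1) := by
  rw [ascPochhammer_succ_left]
  simp [eval_comp]

lemma halfPoch (k : ℕ) : (ascPochhammer ℝ (k+1)).eval (1/2)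
    = ((2*k+1).factorial : ℝ) / (2^(2*k+1) * k.factorial) := by
  induction k with
  | zero => simp
  | succ k ih =>
    rw [pochR, ih, show 2*(k+1)+1 = (2*k+1)+1+1 from by ring, factR (2*k+1+1), factR (2*k+1),
      factR k]
    push_cast
    field_simp
    ring

lemma negPoch (k j : ℕ) : (ascPochhammer ℝ k).eval (-((k+j : ℕ) : ℝ))
    = (-1)^k * ((k+j).factorial : ℝ) / j.factorial := by
  induction k generalizing j with
  | zero => simp [div_self (factNe j)]
  | succ k ih =>
    rw [pochR, show k+1+j = (k+j)+1 from by ring, factR (k+j),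
      show (-(((k+j)+1 : ℕ) : ℝ)) = -((k+(j+1) : ℕ) : ℝ) from by push_cast; ring,
      ih (j+1), show k+(j+1) = (k+j)+1 from by ring, factR (k+j), factR j]
    push_cast
    field_simp
    ring

lemma pochNe {x : ℝ} (hx : ∀ i : ℕ, x + i ≠ 0) (m : ℕ) : (ascPochhammer ℝ m).eval x ≠ 0 := by
  induction m with
  | zero => simp
  | succ m ih => rw [pochR]; exact mul_ne_zero ih (hx m)

lemma bC_zero (n : ℕ) : bC (n+1) 0 = -(2*((2*n : ℝ)+1)) * bC n 0 := by
  unfold bC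
  rw [show (n+1-0) = n+1 from rfl, show (n-0) = n from rfl,
    show 2*(n+1) = (2*n+1)+1 from by ring, factR (2*n+1), factR (2*n), factR n]
  push_cast
  field_simp
  ring

lemma bC_top (n : ℕ) : bC (n+1) (n+1) = 2 * aC n n := by
  unfold bC aC
  rw [Nat.sub_self, Nat.sub_self,
    show 2*(n+1) = (2*n+1)+1 from by ring, factR (2*n+1)]
  push_cast
  field_simp
  ring

lemma bC_mid (k j : ℕ) :
    bC (k+1+j+1) (k+1) = 2 * aC (k+1+j) k - 2*((2*(k+1+j) : ℝ)+1) * bC (k+1+j) (k+1) := by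
  unfold bC aC
  rw [show k+1+j+1-(k+1) = j+1 from by omega, show k+1+j-k = j+1 from by omega,
    show k+1+j-(k+1) = j from by omega,
    show 2*(k+1+j+1) = (2*(k+1+j)+1)+1 from by ring, factR (2*(k+1+j)+1),
    show 2*(k+1+j)+1 = (2*(k+1+j))+1 from rfl, factR (2*(k+1+j)),
    show 2*(k+1) = (2*k+1)+1 from by ring, factR (2*k+1), factR j]
  push_cast
  field_simp
  ring

lemma aC_top (n : ℕ) : aC (n+1) (n+1) = 2 * bC (n+1) (n+1) := by
  unfold aC bC
  rw [Nat.sub_self, show 2*(n+1)+1 = (2*(n+1))+1 from rfl, factR (2*(n+1))]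
  push_cast
  field_simp
  ring

lemma aC_mid (k j : ℕ) :
    aC (k+j+1) k = 2 * bC (k+j+1) k - 2*((2*(k+j) : ℝ)+2) * aC (k+j) k := by
  unfold aC bC
  rw [show k+j+1-k = j+1 from by omega, show k+j-k = j from by omega,
    show 2*(k+j+1)+1 = (2*(k+j)+1)+1+1 from by ring, factR (2*(k+j)+1+1), factR (2*(k+j)+1),
    show 2*(k+j+1) = (2*(k+j)+1)+1 from by ring, factR (2*(k+j)+1),
    show 2*(k+j)+1 = (2*(k+j))+1 from rfl, factR (2*(k+j)),
    show 2*k+1 = (2*k)+1 from rfl, factR (2*k), factR j]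
  push_cast
  field_simp
  ring

lemma hermite_expand (n : ℕ) :
    hermiteP (2*n) = ∑ k ∈ range (n+1), C (bC n k) * X^(2*k) ∧
    hermiteP (2*n+1) = ∑ k ∈ range (n+1), C (aC n k) * X^(2*k+1) := by
  induction n with
  | zero =>
    constructor
    · show hermiteP 0 = _
      simp [hermiteP, bC]
    · show hermiteP 1 = _
      simp [hermiteP, aC, map_ofNat]
  | succ n ih =>
    obtain ⟨ihb, iha⟩ := ih
    have heven : hermiteP (2*(n+1)) = ∑ k ∈ range (n+2), C (bC (n+1) k) * X^(2*k) := by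
      rw [show 2*(n+1) = 2*n+2 from by ring, hermite_rec, iha, ihb]
      rw [Finset.sum_range_succ' (fun k => C (bC (n+1) k) * X^(2*k)) (n+1)]
      rw [Finset.sum_range_succ (fun k => C (bC (n+1) (k+1)) * X^(2*(k+1))) n]
      rw [Finset.sum_range_succ (fun k => C (aC n k) * X^(2*k+1)) n]
      rw [Finset.sum_range_succ' (fun k => C (bC n k) * X^(2*k)) n]
      rw [bC_top, bC_zero]
      have hmid : ∀ k ∈ range n, C (bC (n+1) (k+1)) * X^(2*(k+1))
          = 2 * X * (C (aC n k) * X^(2*k+1))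
            - C (2*((2*n : ℝ)+1)) * (C (bC n (k+1)) * X^(2*(k+1))) := by
        intro k hk
        have hk' := Finset.mem_range.1 hk
        obtain ⟨j, hj⟩ : ∃ j, n = k + 1 + j := ⟨n - (k+1), by omega⟩
        subst hj
        rw [bC_mid k j]
        push_cast [map_sub, map_mul, map_ofNat]
        ring
      rw [mul_add, mul_add, Finset.mul_sum, Finset.mul_sum,
        Finset.sum_congr rfl hmid, Finset.sum_sub_distrib]
      push_cast [map_sub, map_mul, map_neg, map_ofNat]
      ring
    refine ⟨heven, ?_⟩
    rw [show 2*(n+1)+1 = 2*n+3 from by ring, hermite_rec', show 2*n+2 = 2*(n+1) from by ring,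
      heven, iha]
    rw [Finset.sum_range_succ (fun k => C (aC (n+1) k) * X^(2*k+1)) (n+1)]
    rw [Finset.sum_range_succ (fun k => C (bC (n+1) k) * X^(2*k)) (n+1)]
    rw [aC_top]
    have hmid : ∀ k ∈ range (n+1), C (aC (n+1) k) * X^(2*k+1)
        = 2 * X * (C (bC (n+1) k) * X^(2*k))
          - C (2*((2*n : ℝ)+2)) * (C (aC n k) * X^(2*k+1)) := by
      intro k hk
      have hk' := Finset.mem_range.1 hk
      obtain ⟨j, hj⟩ : ∃ j, n = k + j := ⟨n - k, by omega⟩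
      subst hj
      rw [aC_mid k j]
      push_cast [map_sub, map_mul, map_ofNat]
      ring
    rw [mul_add, mul_add, Finset.mul_sum, Finset.mul_sum,
      Finset.sum_congr rfl hmid, Finset.sum_sub_distrib]
    push_cast [map_sub, map_mul, map_ofNat]
    ring

lemma collectC (a b c : ℝ) (k : ℕ) :
    C a * (X * (C b * (C c * ((X : Polynomial ℝ)^2)^k))) = C (a * (b * c)) * X^(2*k+1) := by
  rw [map_mul, map_mul, ← pow_mul]
  ring

set_option maxHeartbeats 1000000 in
theorem dunkl_intertwiner_odd_hermite (μ : ℝ) (hμ : ∀ j : ℕ, μ + 1/2 ≠ -(j : ℝ))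
    (V : Polynomial ℝ →ₗ[ℝ] Polynomial ℝ)
    (hV : ∀ k : ℕ,
      V (X^(2*k + 1))
        = C ((ascPochhammer ℝ (k + 1)).eval (1/2)
              / (ascPochhammer ℝ (k + 1)).eval (μ + 1/2)) * X^(2*k + 1))
    (n : ℕ) :
    V (hermiteP (2*n + 1))
    = C ((-1)^n * ((2*n + 1).factorial : ℝ)
          / (ascPochhammer ℝ (n + 1)).eval (μ + 1/2))
        * (X * (laguerreP (μ + 1/2) n).comp (X^2)) := by
  have h0 : μ + 1/2 ≠ 0 := by simpa using hμ 0
  have hx : ∀ i : ℕ, (μ + 1/2 + 1) + (i : ℝ) ≠ 0 := by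
    intro i
    have := hμ (i+1)
    push_cast at this ⊢
    intro h; exact this (by linarith)
  rw [(hermite_expand n).2, map_sum]
  have hterm : ∀ k ∈ range (n+1), V (C (aC n k) * X^(2*k+1))
      = C (aC n k * ((ascPochhammer ℝ (k + 1)).eval (1/2)
          / (ascPochhammer ℝ (k + 1)).eval (μ + 1/2))) * X^(2*k+1) := by
    intro k _
    rw [← smul_eq_C_mul, map_smul, hV k, smul_eq_C_mul, ← mul_assoc, ← map_mul]
  rw [Finset.sum_congr rfl hterm, laguerreP]
  simp only [mul_comp, Polynomial.sum_comp, C_comp, pow_comp, X_comp]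
  rw [Finset.mul_sum, Finset.mul_sum, Finset.mul_sum]
  refine Finset.sum_congr rfl ?_
  intro k hk
  have hk' := Finset.mem_range.1 hk
  obtain ⟨j, hj⟩ : ∃ j, n = k + j := ⟨n - k, by omega⟩
  subst hj
  rw [collectC]
  congr 1
  congr 1
  rw [halfPoch k, negPoch k j, pochL (μ+1/2) k, pochL (μ+1/2) (k+j)]
  unfold aC
  rw [show k+j-k = j from by omega]
  have hPk := pochNe hx k
  have hPn := pochNe hx (k+j)
  have h1 : (-1 : ℝ)^(k+j) = (-1)^k * (-1)^j := pow_add _ _ _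
  set ν := μ + 1/2 with hν
  set P := (ascPochhammer ℝ k).eval (ν+1) with hP
  set Q := (ascPochhammer ℝ (k+j)).eval (ν+1) with hQ
  set F1 := ((2*(k+j)+1).factorial : ℝ) with hF1
  set F2 := ((2*k+1).factorial : ℝ) with hF2
  set F3 := (j.factorial : ℝ) with hF3
  set F4 := (k.factorial : ℝ) with hF4
  set F5 := ((k+j).factorial : ℝ) with hF5
  have n1 : F1 ≠ 0 := by rw [hF1]; exact factNe _
  have n2 : F2 ≠ 0 := by rw [hF2]; exact factNe _
  have n3 : F3 ≠ 0 := by rw [hF3]; exact factNe _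
  have n4 : F4 ≠ 0 := by rw [hF4]; exact factNe _
  have n5 : F5 ≠ 0 := by rw [hF5]; exact factNe _
  have nT : (2 : ℝ)^(2*k+1) ≠ 0 := by positivity
  rcases Nat.even_or_odd k with hk2 | hk2 <;> rcases Nat.even_or_odd j with hj2 | hj2 <;>
    simp only [h1, hk2.neg_one_pow, hj2.neg_one_pow] <;>
    field_simp [h0, hPk, hPn, n1, n2, n3, n4, n5, nT] <;>
    ring
end
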